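/- arXiv:dg-ga/9606003 — 2 statements merged into one kernel-verified Lean document; each statement's English description precedes it below -/
import Mathlib

section
/- Let real numbers n_{ab}, m_{ac} (indexed over a finite graded set with integer grading μ) satisfy: for all a, c with μ(a) − μ(c) = 2, Σ_{b: μ(b)=μ(a)−1} n_{ab} n_{bc} = 0, and for all a, d with μ(a) − μ(d) = 3, Σ_{c₁: μ(a)−μ(c₁)=1} n_{a c₁} m_{c₁ d} − Σ_{c₂: μ(c₂)−μ(d)=1} m_{a c₂} n_{c₂ d} = 0. Define on the ℝ-vector space with basis {Ωⁿ ⊗ 1_a, Ωⁿ ⊗ η_a : n ≥ 0} (graded by deg(Ωⁿ⊗η_a) = 2n + μ(a), deg(Ωⁿ⊗1_a) = 2n + 1 + μ(a)) the operator D as in the previous statement. Then D has degree −1 and D² = 0. -/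
/-!
The forward direction of the algebraic characterization of the equivariant Floer
differential: given the gluing identities for the coefficients `n_{ab}` (counts of
flow lines of relative index 1) and `m_{ac}` (relative Euler classes over
relative-index-2 moduli spaces), the operator `D` defined by
  `D(Ωⁿ ⊗ 1_a) = −Σ_b n_{ab} Ωⁿ ⊗ 1_b`
  `D(Ωⁿ ⊗ η_a) = Σ_b n_{ab} Ωⁿ ⊗ η_b + Σ_c m_{ac} Ωⁿ ⊗ 1_c − Ω^{n−1} ⊗ 1_a`
has degree `−1` with respect to the grading `deg(Ωⁿ ⊗ η_a) = 2n + μ(a)`,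
`deg(Ωⁿ ⊗ 1_a) = 2n + 1 + μ(a)`, and satisfies `D² = 0`.

We model the underlying vector space as finitely supported functions on
`(ℕ × ι) ⊕ (ℕ × ι)`, where `Sum.inl (n, a)` stands for `Ωⁿ ⊗ 1_a` and
`Sum.inr (n, a)` stands for `Ωⁿ ⊗ η_a`.
-/

noncomputable section

/-- The underlying vector space of the equivariant Floer complex. -/
abbrev EqFloerSpace (ι : Type) : Type := ((ℕ × ι) ⊕ (ℕ × ι)) →₀ ℝ

/-- The grading: `deg(Ωⁿ ⊗ 1_a) = 2n + 1 + μ(a)` and `deg(Ωⁿ ⊗ η_a) = 2n + μ(a)`. -/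
def degGen {ι : Type} (μ : ι → ℤ) : (ℕ × ι) ⊕ (ℕ × ι) → ℤ
  | Sum.inl (p, a) => 2 * (p : ℤ) + 1 + μ a
  | Sum.inr (p, a) => 2 * (p : ℤ) + μ a

/-- The value of the boundary operator on the generators. -/
def Dgen {ι : Type} [Fintype ι] (n m : ι → ι → ℝ) :
    (ℕ × ι) ⊕ (ℕ × ι) → EqFloerSpace ι
  | Sum.inl (p, a) => -(∑ b : ι, n a b • Finsupp.single (Sum.inl (p, b)) (1 : ℝ))
  | Sum.inr (p, a) =>
      (∑ b : ι, n a b • Finsupp.single (Sum.inr (p, b)) (1 : ℝ)) +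
      (∑ c : ι, m a c • Finsupp.single (Sum.inl (p, c)) (1 : ℝ)) -
      (match p with
        | 0 => 0
        | Nat.succ q => Finsupp.single (Sum.inl (q, a)) (1 : ℝ))

/-- The equivariant Floer boundary operator. -/
def Dop {ι : Type} [Fintype ι] (n m : ι → ι → ℝ) :
    EqFloerSpace ι →ₗ[ℝ] EqFloerSpace ι :=
  Finsupp.linearCombination ℝ (Dgen n m)

lemma Dop_single {ι : Type} [Fintype ι] (n m : ι → ι → ℝ) (x : (ℕ × ι) ⊕ (ℕ × ι)) :
    Dop n m (Finsupp.single x 1) = Dgen n m x := by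
  simp [Dop]

lemma mem_support_sum_smul_single {ι : Type} [Fintype ι] (f : ι → ℝ)
    (g : ι → (ℕ × ι) ⊕ (ℕ × ι)) (y : (ℕ × ι) ⊕ (ℕ × ι))
    (hy : y ∈ (∑ b : ι, f b • Finsupp.single (g b) (1 : ℝ)).support) :
    ∃ b, f b ≠ 0 ∧ y = g b := by
  classical
  have := Finsupp.support_finset_sum (s := Finset.univ)
    (f := fun b => f b • Finsupp.single (g b) (1 : ℝ)) hy
  rw [Finset.mem_biUnion] at this
  obtain ⟨b, -, hb⟩ := this
  simp only [Finsupp.smul_single, smul_eq_mul, mul_one, Finsupp.mem_support_iff,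
    Finsupp.single_apply, ne_eq, ite_eq_right_iff, not_forall] at hb
  exact ⟨b, hb.choose_spec, hb.choose.symm⟩

lemma DDgen_inl {ι : Type} [Fintype ι] (n m : ι → ι → ℝ)
    (hnn : ∀ a c : ι, ∑ b : ι, n a b * n b c = 0)
    (p : ℕ) (a : ι) : Dop n m (Dgen n m (Sum.inl (p, a))) = 0 := by
  simp only [Dgen, map_neg, map_sum, map_smul, Dop_single, smul_neg, neg_neg,
    Finset.sum_neg_distrib, Finset.smul_sum, smul_smul]
  rw [Finset.sum_comm]
  simp only [← Finset.sum_smul, hnn, zero_smul, Finset.sum_const_zero]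

lemma DDgen_inr {ι : Type} [Fintype ι] (n m : ι → ι → ℝ)
    (hnn : ∀ a c : ι, ∑ b : ι, n a b * n b c = 0)
    (hnm : ∀ a d : ι, ∑ c : ι, (n a c * m c d - m a c * n c d) = 0)
    (p : ℕ) (a : ι) : Dop n m (Dgen n m (Sum.inr (p, a))) = 0 := by
  have key : ∀ P : ℕ,
      (∑ c : ι, ∑ d : ι, (n a c * m c d) • Finsupp.single (Sum.inl (P, d) : (ℕ × ι) ⊕ (ℕ × ι)) (1:ℝ)) =
      (∑ c : ι, ∑ d : ι, (m a c * n c d) • Finsupp.single (Sum.inl (P, d) : (ℕ × ι) ⊕ (ℕ × ι)) (1:ℝ)) := by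
    intro P
    rw [Finset.sum_comm, Finset.sum_comm (f := fun c d => (m a c * n c d) • Finsupp.single (Sum.inl (P, d) : (ℕ × ι) ⊕ (ℕ × ι)) (1:ℝ))]
    refine Finset.sum_congr rfl fun d _ => ?_
    simp only [← Finset.sum_smul]
    congr 1
    have := hnm a d
    rw [Finset.sum_sub_distrib, sub_eq_zero] at this
    exact this
  rcases p with _ | q
  · simp only [Dgen, map_sub, map_add, map_sum, map_smul, Dop_single, map_zero, sub_zero]
    simp only [Dgen, smul_sub, smul_add, smul_neg, sub_zero, Finset.sum_add_distrib,
      Finset.smul_sum, smul_smul, Finset.sum_neg_distrib]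
    rw [key 0]
    rw [Finset.sum_comm (f := fun b c => (n a b * n b c) • Finsupp.single (Sum.inr (0, c)) (1:ℝ))]
    simp only [← Finset.sum_smul, hnn, zero_smul, Finset.sum_const_zero, zero_add]
    exact add_neg_cancel _
  · simp only [Dgen, map_sub, map_add, map_sum, map_smul, Dop_single]
    simp only [Dgen, smul_sub, smul_add, smul_neg, Finset.sum_sub_distrib, Finset.sum_add_distrib,
      Finset.smul_sum, smul_smul, Finset.sum_neg_distrib]
    rw [key (q+1)]
    rw [Finset.sum_comm (f := fun b c => (n a b * n b c) • Finsupp.single (Sum.inr (q+1, c)) (1:ℝ))]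
    simp only [← Finset.sum_smul, hnn, zero_smul, Finset.sum_const_zero, zero_add]
    abel

theorem equivariant_boundary_degree_and_squares_zero
    (ι : Type) [Fintype ι] (μ : ι → ℤ) (n m : ι → ι → ℝ)
    (hn : ∀ a b : ι, μ a - μ b ≠ 1 → n a b = 0)
    (hm : ∀ a c : ι, μ a - μ c ≠ 2 → m a c = 0)
    -- the gluing identities
    (hid1 : ∀ a c : ι, μ a - μ c = 2 → ∑ b : ι, n a b * n b c = 0)
    (hid2 : ∀ a d : ι, μ a - μ d = 3 →
      (∑ c : ι, n a c * m c d) - (∑ c : ι, m a c * n c d) = 0) :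
    -- `D` has degree `−1` ...
    (∀ x : (ℕ × ι) ⊕ (ℕ × ι), ∀ y ∈ (Dop n m (Finsupp.single x 1)).support,
      degGen μ y = degGen μ x - 1) ∧
    -- ... and `D² = 0`
    (Dop n m).comp (Dop n m) = 0 := by
  classical
  have hnn : ∀ a c : ι, ∑ b : ι, n a b * n b c = 0 := by
    intro a c
    by_cases h : μ a - μ c = 2
    · exact hid1 a c h
    · refine Finset.sum_eq_zero fun b _ => ?_
      by_cases h1 : μ a - μ b = 1
      · rw [hn b c (by omega), mul_zero]
      · rw [hn a b h1, zero_mul]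
  have hnm : ∀ a d : ι, ∑ c : ι, (n a c * m c d - m a c * n c d) = 0 := by
    intro a d
    rw [Finset.sum_sub_distrib]
    by_cases h : μ a - μ d = 3
    · exact hid2 a d h
    · rw [sub_eq_zero]
      have h1 : ∀ c : ι, n a c * m c d = 0 := by
        intro c
        by_cases h1 : μ a - μ c = 1
        · rw [hm c d (by omega), mul_zero]
        · rw [hn a c h1, zero_mul]
      have h2 : ∀ c : ι, m a c * n c d = 0 := by
        intro c
        by_cases h1 : μ a - μ c = 2
        · rw [hn c d (by omega), mul_zero]
        · rw [hm a c h1, zero_mul]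
      simp [h1, h2]
  constructor
  · -- degree −1
    rintro (⟨p, a⟩ | ⟨p, a⟩) y hy <;> rw [Dop_single] at hy
    · rw [show Dgen n m (Sum.inl (p, a)) =
        -(∑ b : ι, n a b • Finsupp.single (Sum.inl (p, b)) (1 : ℝ)) from rfl,
        Finsupp.support_neg] at hy
      obtain ⟨b, hb, rfl⟩ := mem_support_sum_smul_single _ _ _ hy
      have : μ a - μ b = 1 := by by_contra h; exact hb (hn a b h)
      simp only [degGen]; omega
    · have hD : Dgen n m (Sum.inr (p, a)) =
        (∑ b : ι, n a b • Finsupp.single (Sum.inr (p, b)) (1 : ℝ)) +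
        (∑ c : ι, m a c • Finsupp.single (Sum.inl (p, c)) (1 : ℝ)) -
        (match p with
          | 0 => 0
          | Nat.succ q => Finsupp.single (Sum.inl (q, a)) (1 : ℝ)) := rfl
      rw [hD] at hy
      have hy' := Finsupp.support_sub (ι := (ℕ × ι) ⊕ (ℕ × ι)) hy
      rw [Finset.mem_union] at hy'
      rcases hy' with hy' | hy'
      · have hy'' := Finsupp.support_add (ι := (ℕ × ι) ⊕ (ℕ × ι)) hy'
        rw [Finset.mem_union] at hy''
        rcases hy'' with hy'' | hy''
        · obtain ⟨b, hb, rfl⟩ := mem_support_sum_smul_single _ _ _ hy''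
          have : μ a - μ b = 1 := by by_contra h; exact hb (hn a b h)
          simp only [degGen]; omega
        · obtain ⟨c, hc, rfl⟩ := mem_support_sum_smul_single _ _ _ hy''
          have : μ a - μ c = 2 := by by_contra h; exact hc (hm a c h)
          simp only [degGen]; omega
      · rcases p with _ | q
        · simp at hy'
        · have := Finsupp.support_single_subset hy'
          rw [Finset.mem_singleton] at this
          subst this
          simp only [degGen]; push_cast; ring
  · -- D² = 0
    refine Finsupp.lhom_ext fun x r => ?_
    have : (Finsupp.single x r : EqFloerSpace ι) = r • Finsupp.single x 1 := by
      rw [Finsupp.smul_single, smul_eq_mul, mul_one]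
    rw [this, LinearMap.comp_apply, map_smul, map_smul, Dop_single, LinearMap.zero_apply]
    rcases x with ⟨p, a⟩ | ⟨p, a⟩
    · rw [DDgen_inl n m hnn p a, smul_zero]
    · rw [DDgen_inr n m hnn hnm p a, smul_zero]

end
end

section
/- Let D be the equivariant Floer boundary with coefficients n_{ab}, m_{ac} as above, and let Δ be defined on cycles ξ = Σ_a x_a a of odd degree 2k+1 (i.e., Σ_a x_a n_{ab} = 0 for every b of degree 2k) by Δ(ξ) = Σ x_a m_{a c} m_{c e} ⋯ m_{α′ α} n_{α θ}, where the sum is over all chains of indices with μ(a) = 2k+1, μ(c) = 2k−1, ..., μ(α) = 1 and θ of index 0. Then Δ(ξ) is independent of the choice of cycle representative within its homology class, i.e., Δ vanishes on boundaries: Δ(∂η) = 0 for every chain η of degree 2k+2, assuming the identities Σ(m_{ac} n_{cd} + n_{ab} m_{bd}) = 0 for all index pairs of relative index 3. -/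
/-!
Well-definedness of the connecting homomorphism
`Δ_k : SWH_{2k+1}(Y) → H_{2k,U(1)}(θ) = ℝ·Ω^k` (Proposition `connect:homom:prop`):
on a chain `ξ = Σ_a x_a a` of degree `2k+1` it is given by
`Δ(ξ) = Σ x_a m_{ac} m_{ce} ⋯ m_{α′α} n_{αθ}`, the sum being over all chains of
indices with `μ(a) = 2k+1, μ(c) = 2k−1, …, μ(α) = 1` and `θ` of index `0`.
Assuming the `D² = 0` identities satisfied by the coefficients `m` (relative Euler
classes over index-2 moduli spaces) and `n` (counts over index-1 moduli spaces) —
in particular `Σ (m_{ac} n_{cd} + n_{ab} m_{bd}) = 0` for all index pairs of relative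
index 3 — the map `Δ` vanishes on boundaries: `Δ(∂η) = 0` for every chain `η` of
degree `2k+2`.  Hence `Δ(ξ)` only depends on the homology class of the cycle `ξ`.
-/

noncomputable section

/-- One step of the transfer matrix: `x ↦ (c ↦ Σ_a x_a m_{ac})`. -/
def mStep (ι : Type) [Fintype ι] (m : ι → ι → ℝ) (x : ι → ℝ) : ι → ℝ :=
  fun c => ∑ a : ι, x a * m a c

/-- The connecting homomorphism on chains of degree `2k+1`:
`Δ(x) = Σ x_a m_{ac} m_{ce} ⋯ m_{α′α} n_{αθ}` (`k` factors of `m`). -/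
def Delta (ι : Type) [Fintype ι] (m n : ι → ι → ℝ) (θ : ι) (k : ℕ) (x : ι → ℝ) : ℝ :=
  ∑ α : ι, ((mStep ι m)^[k] x) α * n α θ

/-- The boundary `∂(Σ_a η_a a) = Σ_{a,b} η_a n_{ab} b` on chains. -/
def bdry (ι : Type) [Fintype ι] (n : ι → ι → ℝ) (η : ι → ℝ) : ι → ℝ :=
  fun b => ∑ a : ι, η a * n a b

theorem connecting_hom_vanishes_on_boundaries
    (ι : Type) [Fintype ι] (μ : ι → ℤ) (θ : ι) (n m : ι → ι → ℝ)
    (hθ : μ θ = 0)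
    -- support conditions: `n` counts relative index 1, `m` relative index 2
    (hn : ∀ a b : ι, μ a - μ b ≠ 1 → n a b = 0)
    (hm : ∀ a c : ι, μ a - μ c ≠ 2 → m a c = 0)
    -- the `D² = 0` identities
    (hid1 : ∀ a c : ι, μ a - μ c = 2 → ∑ b : ι, n a b * n b c = 0)
    (hid2 : ∀ a d : ι, μ a - μ d = 3 →
      (∑ c : ι, m a c * n c d) + (∑ b : ι, n a b * m b d) = 0)
    -- any chain `η` of degree `2k+2`
    (k : ℕ) (η : ι → ℝ) (hη : ∀ a : ι, μ a ≠ 2 * (k : ℤ) + 2 → η a = 0) :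
    Delta ι m n θ k (bdry ι n η) = 0 := by
  classical
  -- key anticommutation identity: Σ_b n_{ab} m_{bc} = - Σ_b m_{ab} n_{bc}
  have key : ∀ a c : ι, (∑ b : ι, n a b * m b c) = - ∑ b : ι, m a b * n b c := by
    intro a c
    by_cases h3 : μ a - μ c = 3
    · have := hid2 a c h3
      linarith
    · have h1 : (∑ b : ι, n a b * m b c) = 0 := by
        apply Finset.sum_eq_zero
        intro b _
        by_cases hb : μ a - μ b = 1
        · have : μ b - μ c ≠ 2 := by omega
          rw [hm b c this, mul_zero]
        · rw [hn a b hb, zero_mul]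
      have h2 : (∑ b : ι, m a b * n b c) = 0 := by
        apply Finset.sum_eq_zero
        intro b _
        by_cases hb : μ a - μ b = 2
        · have : μ b - μ c ≠ 1 := by omega
          rw [hn b c this, mul_zero]
        · rw [hm a b hb, zero_mul]
      rw [h1, h2, neg_zero]
  -- mStep anticommutes with bdry
  have anticomm : ∀ x : ι → ℝ,
      mStep ι m (bdry ι n x) = fun c => - bdry ι n (mStep ι m x) c := by
    intro x
    funext c
    unfold mStep bdry
    simp only [Finset.sum_mul, ← Finset.sum_neg_distrib]
    rw [Finset.sum_comm]
    conv_rhs => rw [Finset.sum_comm]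
    apply Finset.sum_congr rfl
    intro a _
    have h1 : ∑ b : ι, x a * n a b * m b c = x a * ∑ b : ι, n a b * m b c := by
      rw [Finset.mul_sum]; apply Finset.sum_congr rfl; intro b _; ring
    have h2 : ∑ b : ι, -(x a * m a b * n b c) = -(x a * ∑ b : ι, m a b * n b c) := by
      rw [Finset.mul_sum, ← Finset.sum_neg_distrib]
      apply Finset.sum_congr rfl; intro b _; ring
    rw [h1, h2, key a c]
    ring
  -- iterate: mStep^[j] (bdry η) = (-1)^j • bdry (mStep^[j] η)
  have iter : ∀ j : ℕ, ∀ x : ι → ℝ,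
      (mStep ι m)^[j] (bdry ι n x) = fun c => (-1 : ℝ)^j * bdry ι n ((mStep ι m)^[j] x) c := by
    intro j
    induction j with
    | zero => intro x; funext c; simp
    | succ j ih =>
      intro x
      funext c
      rw [Function.iterate_succ_apply', ih x]
      have : mStep ι m (fun c => (-1 : ℝ)^j * bdry ι n ((mStep ι m)^[j] x) c) c
          = (-1 : ℝ)^j * mStep ι m (bdry ι n ((mStep ι m)^[j] x)) c := by
        unfold mStep
        rw [Finset.mul_sum]
        apply Finset.sum_congr rfl
        intro a _; ring
      rw [this, anticomm ((mStep ι m)^[j] x)]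
      rw [Function.iterate_succ_apply']
      ring
  -- final contraction vanishes
  have nn : ∀ a : ι, (∑ α : ι, n a α * n α θ) = 0 := by
    intro a
    by_cases h2 : μ a - μ θ = 2
    · exact hid1 a θ h2
    · apply Finset.sum_eq_zero
      intro α _
      by_cases hα : μ a - μ α = 1
      · have : μ α - μ θ ≠ 1 := by omega
        rw [hn α θ this, mul_zero]
      · rw [hn a α hα, zero_mul]
  unfold Delta
  rw [iter k η]
  have : ∀ α : ι, ((-1 : ℝ)^k * bdry ι n ((mStep ι m)^[k] η) α) * n α θ
      = (-1 : ℝ)^k * ∑ a : ι, ((mStep ι m)^[k] η) a * (n a α * n α θ) := by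
    intro α
    unfold bdry
    rw [Finset.mul_sum]
    rw [Finset.sum_mul, Finset.mul_sum]
    apply Finset.sum_congr rfl
    intro a _; ring
  calc ∑ α : ι, ((-1 : ℝ)^k * bdry ι n ((mStep ι m)^[k] η) α) * n α θ
      = ∑ α : ι, (-1 : ℝ)^k * ∑ a : ι, ((mStep ι m)^[k] η) a * (n a α * n α θ) := by
        apply Finset.sum_congr rfl; intro α _; exact this α
    _ = (-1 : ℝ)^k * ∑ a : ι, ((mStep ι m)^[k] η) a * (∑ α : ι, n a α * n α θ) := by
        rw [← Finset.mul_sum]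
        congr 1
        rw [Finset.sum_comm]
        apply Finset.sum_congr rfl
        intro a _
        rw [Finset.mul_sum]
    _ = 0 := by
        rw [Finset.sum_eq_zero, mul_zero]
        intro a _
        rw [nn a, mul_zero]

end
end
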